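/- Let L>0, Σ>0, and let f:[−L,L]→ℝ be continuous. Define w(η)=(2/Σ²)·( ((η+L)/(2L))·∫_{−L}^{L}(L−ξ)f(ξ)dξ − ∫_{−L}^{η}(η−ξ)f(ξ)dξ ), and define the triangular density φ(η)=(η+L)/L² for −L≤η≤0 and φ(η)=(L−η)/L² for 0≤η≤L. Then w(0)=(L²/Σ²)·∫_{−L}^{L} f(ξ)φ(ξ)dξ. -/

import Mathlib

/-- The expected accumulated reward until exit, started at 0, equals the mean exit
time `L²/Σ²` times the stationary (triangular-density) average of `f`. -/
theorem stmt5
    (L Sig : ℝ) (hL : 0 < L) (hS : 0 < Sig)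
    (f φ w : ℝ → ℝ)
    (hf : ContinuousOn f (Set.Icc (-L) L))
    (hφ : ∀ η, φ η = if η ≤ 0 then (η + L) / L ^ 2 else (L - η) / L ^ 2)
    (hw : ∀ η, w η = (2 / Sig ^ 2) *
      (((η + L) / (2 * L)) * (∫ ξ in (-L)..L, (L - ξ) * f ξ) -
        ∫ ξ in (-L)..η, (η - ξ) * f ξ)) :
    w 0 = (L ^ 2 / Sig ^ 2) * ∫ ξ in (-L)..L, f ξ * φ ξ := by
  have hL0 : -L ≤ (0:ℝ) := by linarith
  have h0L : (0:ℝ) ≤ L := le_of_lt hL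
  have hLne : L ≠ 0 := ne_of_gt hL
  have hSne : Sig ≠ 0 := ne_of_gt hS
  have hsub1 : Set.uIcc (-L) (0:ℝ) ⊆ Set.Icc (-L) L := by
    rw [Set.uIcc_of_le hL0]; exact Set.Icc_subset_Icc le_rfl h0L
  have hsub2 : Set.uIcc (0:ℝ) L ⊆ Set.Icc (-L) L := by
    rw [Set.uIcc_of_le h0L]; exact Set.Icc_subset_Icc hL0 le_rfl
  have hcg : ContinuousOn (fun ξ : ℝ => ξ * f ξ) (Set.Icc (-L) L) :=
    continuousOn_id.mul hf
  have hcLf : ContinuousOn (fun ξ : ℝ => (L - ξ) * f ξ) (Set.Icc (-L) L) :=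
    (continuousOn_const.sub continuousOn_id).mul hf
  have hf1 : IntervalIntegrable f MeasureTheory.volume (-L) 0 :=
    (hf.mono hsub1).intervalIntegrable
  have hf2 : IntervalIntegrable f MeasureTheory.volume 0 L :=
    (hf.mono hsub2).intervalIntegrable
  have hg1 : IntervalIntegrable (fun ξ => ξ * f ξ) MeasureTheory.volume (-L) 0 :=
    (hcg.mono hsub1).intervalIntegrable
  have hg2 : IntervalIntegrable (fun ξ => ξ * f ξ) MeasureTheory.volume 0 L :=
    (hcg.mono hsub2).intervalIntegrable
  have hLf1 : IntervalIntegrable (fun ξ => (L - ξ) * f ξ) MeasureTheory.volume (-L) 0 :=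
    (hcLf.mono hsub1).intervalIntegrable
  have hLf2 : IntervalIntegrable (fun ξ => (L - ξ) * f ξ) MeasureTheory.volume 0 L :=
    (hcLf.mono hsub2).intervalIntegrable
  set A := ∫ ξ in (-L)..0, f ξ with hA
  set B := ∫ ξ in (-L)..0, ξ * f ξ with hB
  set C := ∫ ξ in (0:ℝ)..L, f ξ with hC
  set D := ∫ ξ in (0:ℝ)..L, ξ * f ξ with hD
  have e1 : (∫ ξ in (-L)..0, (L - ξ) * f ξ) = L * A - B := by
    have h : ∀ ξ : ℝ, (L - ξ) * f ξ = L * f ξ - ξ * f ξ := fun ξ => by ring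
    simp_rw [h]
    rw [intervalIntegral.integral_sub (hf1.const_mul L) hg1,
        intervalIntegral.integral_const_mul]
  have e2 : (∫ ξ in (0:ℝ)..L, (L - ξ) * f ξ) = L * C - D := by
    have h : ∀ ξ : ℝ, (L - ξ) * f ξ = L * f ξ - ξ * f ξ := fun ξ => by ring
    simp_rw [h]
    rw [intervalIntegral.integral_sub (hf2.const_mul L) hg2,
        intervalIntegral.integral_const_mul]
  have esplit : (∫ ξ in (-L)..L, (L - ξ) * f ξ) = (L * A - B) + (L * C - D) := by
    rw [← intervalIntegral.integral_add_adjacent_intervals hLf1 hLf2, e1, e2]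
  have e3 : (∫ ξ in (-L)..(0:ℝ), ((0:ℝ) - ξ) * f ξ) = -B := by
    have h : ∀ ξ : ℝ, ((0:ℝ) - ξ) * f ξ = -(ξ * f ξ) := fun ξ => by ring
    simp_rw [h]
    rw [intervalIntegral.integral_neg]
  have eφ1 : (∫ ξ in (-L)..(0:ℝ), f ξ * φ ξ) = (B + L * A) / L ^ 2 := by
    have hcongr : Set.EqOn (fun ξ => f ξ * φ ξ)
        (fun ξ => (ξ * f ξ + L * f ξ) / L ^ 2) (Set.uIcc (-L) (0:ℝ)) := by
      intro ξ hξ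
      rw [Set.uIcc_of_le hL0] at hξ
      simp only [hφ ξ, if_pos hξ.2]
      ring
    rw [intervalIntegral.integral_congr hcongr]
    rw [intervalIntegral.integral_div,
        intervalIntegral.integral_add hg1 (hf1.const_mul L),
        intervalIntegral.integral_const_mul]
  have eφ2 : (∫ ξ in (0:ℝ)..L, f ξ * φ ξ) = (L * C - D) / L ^ 2 := by
    have hcongr : Set.EqOn (fun ξ => f ξ * φ ξ)
        (fun ξ => (L * f ξ - ξ * f ξ) / L ^ 2) (Set.uIcc (0:ℝ) L) := by
      intro ξ hξ
      rw [Set.uIcc_of_le h0L] at hξ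
      simp only [hφ ξ]
      by_cases h0 : ξ ≤ 0
      · have : ξ = 0 := le_antisymm h0 hξ.1
        subst this
        simp only [if_pos le_rfl]
        ring
      · simp only [if_neg h0]
        ring
    rw [intervalIntegral.integral_congr hcongr]
    rw [intervalIntegral.integral_div,
        intervalIntegral.integral_sub (hf2.const_mul L) hg2,
        intervalIntegral.integral_const_mul]
  have hφint1 : IntervalIntegrable (fun ξ => f ξ * φ ξ) MeasureTheory.volume (-L) 0 := by
    apply IntervalIntegrable.congr_ae ((hg1.add (hf1.const_mul L)).div_const (L ^ 2))
    exact MeasureTheory.ae_restrict_of_forall_mem measurableSet_uIoc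
      (fun ξ hξ => by
        have hξ' : ξ ∈ Set.uIcc (-L) (0:ℝ) := Set.uIoc_subset_uIcc hξ
        rw [Set.uIcc_of_le hL0] at hξ'
        simp only [hφ ξ, if_pos hξ'.2]
        ring)
  have hφint2 : IntervalIntegrable (fun ξ => f ξ * φ ξ) MeasureTheory.volume 0 L := by
    apply IntervalIntegrable.congr_ae (((hf2.const_mul L).sub hg2).div_const (L ^ 2))
    exact MeasureTheory.ae_restrict_of_forall_mem measurableSet_uIoc
      (fun ξ hξ => by
        have hξ' : ξ ∈ Set.uIoc (0:ℝ) L := hξ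
        rw [Set.uIoc_of_le h0L] at hξ'
        have h0 : ¬ ξ ≤ 0 := not_le.mpr hξ'.1
        simp only [hφ ξ, if_neg h0]
        ring)
  have eφ : (∫ ξ in (-L)..L, f ξ * φ ξ) = (B + L * A) / L ^ 2 + (L * C - D) / L ^ 2 := by
    rw [← intervalIntegral.integral_add_adjacent_intervals hφint1 hφint2, eφ1, eφ2]
  rw [hw 0, esplit, e3, eφ]
  field_simp
  ring
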